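/- Let r ≥ 0, a > 0, γ ≥ 0, δ ∈ ℝ. Let P be a nonzero polynomial with real coefficients such that every complex root of P lies in the strip S(r) = {w ∈ ℂ : |Im w| ≤ r}, and assume that γ > 0 or P has degree at least 1. Define f : ℂ → ℂ by f(z) = exp(δz - γz²)·P(z). If z = x + iy ∈ ℂ satisfies y > 0 and y² > r² - a², then |f(z - ia)| < |f(z + ia)|. -/

import Mathlib

open Complex Polynomial

private lemma abs_eval_eq (Q : Polynomial ℂ) (ζ : ℂ) :
    ‖Q.eval ζ‖ =
      ‖Q.leadingCoeff‖ * (Q.roots.map fun w => ‖ζ - w‖).prod := by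
  conv_lhs => rw [Splits.eq_prod_roots (IsAlgClosed.splits Q)]
  rw [eval_mul, eval_C, norm_mul, eval_multiset_prod, Multiset.map_map,
    (by exact map_multiset_prod (normHom : ℂ →*₀ ℝ) _ :
      ‖(Multiset.map (eval ζ ∘ fun x => X - C x) Q.roots).prod‖ =
        (Multiset.map (fun x : ℂ => ‖x‖) (Multiset.map (eval ζ ∘ fun x => X - C x) Q.roots)).prod),
    Multiset.map_map]
  simp

private lemma multiset_prod_le_prod {s : Multiset ℂ} {f g : ℂ → ℝ}
    (h0 : ∀ w ∈ s, 0 ≤ f w) (h1 : ∀ w ∈ s, f w ≤ g w) :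
    (s.map f).prod ≤ (s.map g).prod := by
  induction s using Multiset.induction with
  | empty => simp
  | cons a s ih =>
    simp only [Multiset.map_cons, Multiset.prod_cons]
    have hfa : 0 ≤ f a := h0 a (Multiset.mem_cons_self a s)
    have hga : 0 ≤ g a := le_trans hfa (h1 a (Multiset.mem_cons_self a s))
    have hfs : 0 ≤ (s.map f).prod := by
      apply Multiset.prod_nonneg
      intro x hx
      obtain ⟨w, hw, rfl⟩ := Multiset.mem_map.mp hx
      exact h0 w (Multiset.mem_cons_of_mem hw)
    have ihs : (s.map f).prod ≤ (s.map g).prod :=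
      ih (fun w hw => h0 w (Multiset.mem_cons_of_mem hw))
        (fun w hw => h1 w (Multiset.mem_cons_of_mem hw))
    exact mul_le_mul (h1 a (Multiset.mem_cons_self a s)) ihs hfs hga

private lemma multiset_prod_lt_prod {s : Multiset ℂ} (hs : s ≠ 0) {f g : ℂ → ℝ}
    (h0 : ∀ w ∈ s, 0 ≤ f w) (h1 : ∀ w ∈ s, f w < g w) :
    (s.map f).prod < (s.map g).prod := by
  induction s using Multiset.induction with
  | empty => exact absurd rfl hs
  | cons a s ih =>
    simp only [Multiset.map_cons, Multiset.prod_cons]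
    have hfa : 0 ≤ f a := h0 a (Multiset.mem_cons_self a s)
    have hgs : 0 < (s.map g).prod := by
      apply Multiset.prod_pos
      intro x hx
      obtain ⟨w, hw, rfl⟩ := Multiset.mem_map.mp hx
      exact lt_of_le_of_lt (h0 w (Multiset.mem_cons_of_mem hw))
        (h1 w (Multiset.mem_cons_of_mem hw))
    have hle : (s.map f).prod ≤ (s.map g).prod :=
      multiset_prod_le_prod (fun w hw => h0 w (Multiset.mem_cons_of_mem hw))
        (fun w hw => (h1 w (Multiset.mem_cons_of_mem hw)).le)
    calc f a * (s.map f).prod ≤ f a * (s.map g).prod :=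
          mul_le_mul_of_nonneg_left hle hfa
      _ < g a * (s.map g).prod :=
          mul_lt_mul_of_pos_right (h1 a (Multiset.mem_cons_self a s)) hgs

theorem modulus_inequality (r a γ δ : ℝ) (hr : 0 ≤ r) (ha : 0 < a) (hγ : 0 ≤ γ)
    (P : Polynomial ℝ) (hP : P ≠ 0)
    (hroots : ∀ w : ℂ, Polynomial.aeval w P = 0 → |w.im| ≤ r)
    (hnontriv : 0 < γ ∨ 1 ≤ P.natDegree)
    (f : ℂ → ℂ)
    (hf : ∀ z : ℂ, f z = Complex.exp ((δ : ℂ) * z - (γ : ℂ) * z ^ 2) * Polynomial.aeval z P)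
    (z : ℂ) (hy : 0 < z.im) (hstrip : z.im ^ 2 > r ^ 2 - a ^ 2) :
    ‖f (z - a * Complex.I)‖ < ‖f (z + a * Complex.I)‖ := by
  set Q : Polynomial ℂ := P.map (algebraMap ℝ ℂ) with hQdef
  have haev : ∀ ζ : ℂ, Polynomial.aeval ζ P = Q.eval ζ := by
    intro ζ; rw [Polynomial.aeval_def, hQdef, Polynomial.eval_map]
  have hQ0 : Q ≠ 0 := Polynomial.map_ne_zero hP
  have hconj : ∀ ζ : ℂ, Q.eval ((starRingEnd ℂ) ζ) = (starRingEnd ℂ) (Q.eval ζ) := by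
    intro ζ
    rw [← haev, ← haev, Polynomial.aeval_conj]
  -- squared modulus formula with conjugate pairing
  have hsq : ∀ ζ : ℂ, (‖Q.eval ζ‖) ^ 2 =
      (‖Q.leadingCoeff‖) ^ 2 *
        (Q.roots.map fun w =>
          ‖ζ - w‖ * ‖ζ - (starRingEnd ℂ) w‖).prod := by
    intro ζ
    have h1 := abs_eval_eq Q ζ
    have h2 := abs_eval_eq Q ((starRingEnd ℂ) ζ)
    rw [hconj, Complex.norm_conj] at h2
    have h3 : (Q.roots.map fun w => ‖(starRingEnd ℂ) ζ - w‖).prod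
        = (Q.roots.map fun w => ‖ζ - (starRingEnd ℂ) w‖).prod := by
      apply congrArg
      apply Multiset.map_congr rfl
      intro w _
      rw [← Complex.norm_conj ((starRingEnd ℂ) ζ - w), map_sub, Complex.conj_conj]
    rw [h3] at h2
    calc (‖Q.eval ζ‖) ^ 2 = ‖Q.eval ζ‖ * ‖Q.eval ζ‖ :=
          sq (‖Q.eval ζ‖)
      _ = (‖Q.leadingCoeff‖ * (Q.roots.map fun w => ‖ζ - w‖).prod) *
            (‖Q.leadingCoeff‖ *
              (Q.roots.map fun w => ‖ζ - (starRingEnd ℂ) w‖).prod) := by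
          rw [← h1, ← h2]
      _ = (‖Q.leadingCoeff‖) ^ 2 *
            ((Q.roots.map fun w => ‖ζ - w‖).prod *
             (Q.roots.map fun w => ‖ζ - (starRingEnd ℂ) w‖).prod) := by ring
      _ = _ := by rw [← Multiset.prod_map_mul]
  set ζm : ℂ := z - a * Complex.I with hζm
  set ζp : ℂ := z + a * Complex.I with hζp
  have hζmre : ζm.re = z.re := by simp [hζm]
  have hζmim : ζm.im = z.im - a := by simp [hζm]
  have hζpre : ζp.re = z.re := by simp [hζp]
  have hζpim : ζp.im = z.im + a := by simp [hζp]
  -- roots have |Im| ≤ r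
  have hrim : ∀ w ∈ Q.roots, |w.im| ≤ r := by
    intro w hw
    exact hroots w (by rw [haev]; exact Polynomial.isRoot_of_mem_roots hw)
  -- per-root strict inequality
  have hkey : ∀ w ∈ Q.roots,
      ‖ζm - w‖ * ‖ζm - (starRingEnd ℂ) w‖ <
      ‖ζp - w‖ * ‖ζp - (starRingEnd ℂ) w‖ := by
    intro w hw
    have ht2 : w.im ^ 2 ≤ r ^ 2 := by
      have := hrim w hw
      nlinarith [abs_nonneg w.im, _root_.sq_abs w.im]
    apply lt_of_pow_lt_pow_left₀ 2 (by positivity)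
    rw [mul_pow, mul_pow, Complex.sq_norm, Complex.sq_norm, Complex.sq_norm, Complex.sq_norm]
    simp only [Complex.normSq_apply, Complex.sub_re, Complex.sub_im,
      Complex.conj_re, Complex.conj_im, hζmre, hζmim, hζpre, hζpim]
    nlinarith [mul_nonneg (mul_nonneg ha.le hy.le) (sq_nonneg (z.re - w.re)),
      mul_pos (mul_pos ha hy) (show (0:ℝ) < z.im ^ 2 + a ^ 2 - w.im ^ 2 by nlinarith),
      sq_nonneg (z.re - w.re)]
  -- nonnegativity / positivity of pair factors
  have hnn : ∀ w ∈ Q.roots,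
      0 ≤ ‖ζm - w‖ * ‖ζm - (starRingEnd ℂ) w‖ := by
    intro w _; positivity
  have hpos : ∀ w ∈ Q.roots,
      0 < ‖ζp - w‖ * ‖ζp - (starRingEnd ℂ) w‖ :=
    fun w hw => lt_of_le_of_lt (hnn w hw) (hkey w hw)
  -- exponential part
  have habsf : ∀ ζ : ℂ, ‖f ζ‖ =
      Real.exp (((δ : ℂ) * ζ - (γ : ℂ) * ζ ^ 2).re) * ‖Q.eval ζ‖ := by
    intro ζ
    rw [hf, norm_mul, Complex.norm_exp, haev]
  have hEm : ((δ : ℂ) * ζm - (γ : ℂ) * ζm ^ 2).re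
      = δ * z.re - γ * (z.re ^ 2 - (z.im - a) ^ 2) := by
    simp only [Complex.sub_re, Complex.mul_re, Complex.ofReal_re, Complex.ofReal_im,
      pow_two, Complex.mul_im, hζmre, hζmim]
    ring
  have hEp : ((δ : ℂ) * ζp - (γ : ℂ) * ζp ^ 2).re
      = δ * z.re - γ * (z.re ^ 2 - (z.im + a) ^ 2) := by
    simp only [Complex.sub_re, Complex.mul_re, Complex.ofReal_re, Complex.ofReal_im,
      pow_two, Complex.mul_im, hζpre, hζpim]
    ring
  have hexple : Real.exp (((δ : ℂ) * ζm - (γ : ℂ) * ζm ^ 2).re)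
      ≤ Real.exp (((δ : ℂ) * ζp - (γ : ℂ) * ζp ^ 2).re) := by
    rw [hEm, hEp]
    apply Real.exp_le_exp.mpr
    nlinarith [mul_nonneg (mul_nonneg hγ ha.le) hy.le]
  have hexppos : ∀ x : ℝ, 0 < Real.exp x := fun x => Real.exp_pos x
  -- squared inequality for the polynomial part
  have hPle : (‖Q.eval ζm‖) ^ 2 ≤ (‖Q.eval ζp‖) ^ 2 := by
    rw [hsq, hsq]
    exact mul_le_mul_of_nonneg_left
      (multiset_prod_le_prod hnn (fun w hw => (hkey w hw).le)) (by positivity)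
  have hQppos : 0 < ‖Q.eval ζp‖ := by
    rw [norm_pos_iff]
    intro h
    have : |ζp.im| ≤ r := hroots ζp (by rw [haev]; exact h)
    rw [hζpim] at this
    have := abs_le.mp this
    nlinarith [this.2]
  -- conclude via squares
  apply lt_of_pow_lt_pow_left₀ 2 (norm_nonneg _)
  rw [habsf ζm, habsf ζp, mul_pow, mul_pow]
  rcases hnontriv with hγpos | hdeg
  · -- strict from the exponential factor
    have hstrictexp : Real.exp (((δ : ℂ) * ζm - (γ : ℂ) * ζm ^ 2).re)
        < Real.exp (((δ : ℂ) * ζp - (γ : ℂ) * ζp ^ 2).re) := by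
      rw [hEm, hEp]
      apply Real.exp_lt_exp.mpr
      nlinarith [mul_pos (mul_pos hγpos ha) hy]
    calc Real.exp (((δ : ℂ) * ζm - (γ : ℂ) * ζm ^ 2).re) ^ 2 * ‖Q.eval ζm‖ ^ 2
        ≤ Real.exp (((δ : ℂ) * ζm - (γ : ℂ) * ζm ^ 2).re) ^ 2 *
            ‖Q.eval ζp‖ ^ 2 := by
          apply mul_le_mul_of_nonneg_left hPle (by positivity)
      _ < Real.exp (((δ : ℂ) * ζp - (γ : ℂ) * ζp ^ 2).re) ^ 2 *
            ‖Q.eval ζp‖ ^ 2 := by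
          apply mul_lt_mul_of_pos_right _ (by positivity)
          exact pow_lt_pow_left₀ hstrictexp (hexppos _).le two_ne_zero
  · -- strict from the roots
    have hcard : Multiset.card Q.roots = Q.natDegree :=
      (Polynomial.splits_iff_card_roots).mp (IsAlgClosed.splits Q)
    have hdegQ : 1 ≤ Q.natDegree := by
      rwa [hQdef, Polynomial.natDegree_map]
    have hs0 : Q.roots ≠ 0 := by
      intro h
      rw [h] at hcard
      simp at hcard
      omega
    have hPlt : (‖Q.eval ζm‖) ^ 2 < (‖Q.eval ζp‖) ^ 2 := by
      rw [hsq, hsq]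
      apply mul_lt_mul_of_pos_left (multiset_prod_lt_prod hs0 hnn hkey)
      rw [pow_two]
      apply mul_pos <;>
        exact norm_pos_iff.mpr (Polynomial.leadingCoeff_ne_zero.mpr hQ0)
    calc Real.exp (((δ : ℂ) * ζm - (γ : ℂ) * ζm ^ 2).re) ^ 2 * ‖Q.eval ζm‖ ^ 2
        < Real.exp (((δ : ℂ) * ζm - (γ : ℂ) * ζm ^ 2).re) ^ 2 *
            ‖Q.eval ζp‖ ^ 2 := by
          apply mul_lt_mul_of_pos_left hPlt (by positivity)
      _ ≤ Real.exp (((δ : ℂ) * ζp - (γ : ℂ) * ζp ^ 2).re) ^ 2 *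
            ‖Q.eval ζp‖ ^ 2 := by
          apply mul_le_mul_of_nonneg_right _ (by positivity)
          exact pow_le_pow_left₀ (hexppos _).le hexple 2
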